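/- Under the standing setup, let μ be a Borel probability measure on X whose support is an attractor. Then μ is an attracting measure if and only if for every m-absolutely continuous probability measure ν with ν(Basin(supp μ)) = 1, the pushforwards f^t ν converge weakly to μ as t → ∞. -/

import Mathlib

open MeasureTheory Filter Topology Set Metric
open scoped NNReal ENNReal

/-- The (topological) support of a measure. -/
def msupp {X : Type*} [TopologicalSpace X] [MeasurableSpace X] (μ : Measure X) : Set X :=
  {x | ∀ U : Set X, IsOpen U → x ∈ U → 0 < μ U}

/-- The basin of attraction of a set `A`. -/
def basinSet {X : Type*} [MetricSpace X] (f : ℝ → X → X) (A : Set X) : Set X :=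
  {x | Tendsto (fun t : ℝ => infDist (f t x) A) atTop (𝓝 0)}

/-- `μ` is an attracting measure (w.r.t. the reference measure `m` and semiflow `f`):
a compactly supported Borel probability measure whose support admits an open
neighbourhood `U` such that every `m`-absolutely continuous probability measure `ν`
with `ν U = 1` satisfies `f^t ν → μ` weakly as `t → ∞`. -/
def AttractingMeasure {X : Type*} [TopologicalSpace X] [MeasurableSpace X]
    (m : Measure X) (f : ℝ → X → X) (μ : Measure X) : Prop :=
  IsProbabilityMeasure μ ∧ IsCompact (msupp μ) ∧
    ∃ U : Set X, IsOpen U ∧ msupp μ ⊆ U ∧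
      ∀ ν : Measure X, IsProbabilityMeasure ν → ν ≪ m → ν U = 1 →
        ∀ g : BoundedContinuousFunction X ℝ,
          Tendsto (fun t : ℝ => ∫ x, g x ∂(ν.map (f t))) atTop (𝓝 (∫ x, g x ∂μ))

/-- Under the standing setup, let `μ` be a Borel probability measure
whose support is an attractor. Then `μ` is attracting if and only if for every
`m`-absolutely continuous probability measure `ν` with `ν (Basin(supp μ)) = 1`, the
pushforwards `f^t ν` converge weakly to `μ` as `t → ∞`. -/
theorem stmt_11 {X : Type*} [MetricSpace X] [TopologicalSpace.SeparableSpace X]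
    [MeasurableSpace X] [BorelSpace X]
    (m : Measure X) [IsLocallyFiniteMeasure m] [m.IsOpenPosMeasure]
    (f : ℝ → X → X)
    (hf0 : f 0 = id)
    (hfadd : ∀ s t : ℝ, 0 ≤ s → 0 ≤ t → f (s + t) = f s ∘ f t)
    (hcont : ContinuousOn (fun p : ℝ × X => f p.1 p.2) (Set.Ici 0 ×ˢ Set.univ))
    (hcover : ∀ x : X, ∃ V : Set X, IsOpen V ∧ x ∈ V ∧
      ∀ t : ℝ, 0 ≤ t → ∃ D : ℝ≥0, ∀ S : Set X, MeasurableSet S →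
        m (V ∩ f t ⁻¹' S) ≤ (D : ℝ≥0∞) * m S)
    (μ : Measure X) [IsProbabilityMeasure μ]
    (hne : (msupp μ).Nonempty) (hcomp : IsCompact (msupp μ))
    (hinv : ∀ t : ℝ, 0 ≤ t → f t '' (msupp μ) = msupp μ)
    (hattr : ∃ V : Set X, IsOpen V ∧ msupp μ ⊆ V ∧ V ⊆ basinSet f (msupp μ)) :
    AttractingMeasure m f μ ↔
      ∀ ν : Measure X, IsProbabilityMeasure ν → ν ≪ m →
        ν (basinSet f (msupp μ)) = 1 →
        ∀ g : BoundedContinuousFunction X ℝ,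
          Tendsto (fun t : ℝ => ∫ x, g x ∂(ν.map (f t))) atTop (𝓝 (∫ x, g x ∂μ)) := by
  constructor
  · -- hard direction
    rintro ⟨-, -, U, hUopen, hAU, hU⟩
    intro ν hν hac hbasin g
    set A := msupp μ with hA
    -- continuity of each time map
    have hfc : ∀ t : ℝ, 0 ≤ t → Continuous (f t) := by
      intro t ht
      rw [← continuousOn_univ]
      have h1 : Continuous (fun x : X => ((t, x) : ℝ × X)) :=
        continuous_const.prodMk continuous_id
      exact hcont.comp h1.continuousOn (fun x _ => mk_mem_prod ht (mem_univ x))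
    -- null preservation from condition (H)
    have hmnull : ∀ t : ℝ, 0 ≤ t → ∀ S : Set X, MeasurableSet S → m S = 0 →
        m (f t ⁻¹' S) = 0 := by
      intro t ht S hS h0
      have : SecondCountableTopology X := UniformSpace.secondCountable_of_separable X
      choose V hVopen hVmem hVD using hcover
      obtain ⟨T, hTc, hTU⟩ := TopologicalSpace.isOpen_iUnion_countable V hVopen
      have hcov : f t ⁻¹' S ⊆ ⋃ x ∈ T, (V x ∩ f t ⁻¹' S) := by
        intro y hy
        have : y ∈ ⋃ x, V x := mem_iUnion.mpr ⟨y, hVmem y⟩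
        rw [← hTU] at this
        obtain ⟨x, hxT, hxy⟩ := mem_iUnion₂.mp this
        exact mem_iUnion₂.mpr ⟨x, hxT, ⟨hxy, hy⟩⟩
      refine le_antisymm (le_trans (measure_mono hcov) ?_) zero_le
      refine le_of_eq ((measure_biUnion_null_iff hTc).mpr ?_)
      intro x hx
      obtain ⟨D, hD⟩ := hVD x t ht
      have := hD S hS
      rw [h0, mul_zero] at this
      exact le_antisymm this zero_le
    have hacmap : ∀ t : ℝ, 0 ≤ t → ∀ κ : Measure X, κ ≪ m → κ.map (f t) ≪ m := by
      intro t ht κ hκ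
      refine Measure.AbsolutelyContinuous.mk fun S hS h0 => ?_
      rw [Measure.map_apply (hfc t ht).measurable hS]
      exact hκ (hmnull t ht S hS h0)
    -- a closed set between supp μ and U, uniform thickening
    obtain ⟨ε, hε, hthick⟩ := hcomp.exists_thickening_subset_open hUopen hAU
    set C : Set X := {y | infDist y A ≤ ε / 2} with hC
    have hCU : C ⊆ U := by
      intro y hy
      exact hthick ((mem_thickening_iff_infDist_lt hne).mpr
        (lt_of_le_of_lt hy (by linarith)))
    have hCclosed : IsClosed C := isClosed_le (continuous_infDist_pt A) continuous_const
    -- the sets B n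
    set B : ℕ → Set X := fun n => ⋂ t ∈ Ici (n : ℝ), f t ⁻¹' C with hB
    have hBclosed : ∀ n, IsClosed (B n) := fun n =>
      isClosed_biInter fun t ht =>
        hCclosed.preimage (hfc t (le_trans (Nat.cast_nonneg n) ht))
    have hBmono : Monotone B := fun a b hab =>
      biInter_subset_biInter_left (Ici_subset_Ici.mpr (by exact_mod_cast hab))
    have hbasinB : basinSet f A ⊆ ⋃ n, B n := by
      intro x hx
      have hx' : Tendsto (fun t : ℝ => infDist (f t x) A) atTop (𝓝 0) := hx
      have hev : ∀ᶠ t : ℝ in atTop, infDist (f t x) A < ε / 2 :=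
        hx' (Iio_mem_nhds (by linarith))
      obtain ⟨T, hT⟩ := eventually_atTop.mp hev
      obtain ⟨n, hn⟩ := exists_nat_ge T
      refine mem_iUnion.mpr ⟨n, ?_⟩
      refine mem_iInter₂.mpr fun t ht => ?_
      exact le_of_lt (hT t (le_trans hn ht))
    -- ν (B n) → 1
    have hUnion : ν (⋃ n, B n) = 1 :=
      le_antisymm prob_le_one (hbasin ▸ measure_mono hbasinB)
    have htendB : Tendsto (fun n => ν (B n)) atTop (𝓝 1) := by
      have := tendsto_measure_iUnion_atTop (μ := ν) hBmono
      rwa [hUnion] at this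
    have htendBr : Tendsto (fun n => (ν (B n)).toReal) atTop (𝓝 1) := by
      have h1 : Tendsto ENNReal.toReal (𝓝 (1 : ℝ≥0∞)) (𝓝 (1 : ℝ≥0∞).toReal) :=
        ENNReal.tendsto_toReal ENNReal.one_ne_top
      simpa [Function.comp_def] using h1.comp htendB
    have hsum : ∀ n : ℕ, (ν (B n)).toReal + (ν (B n)ᶜ).toReal = 1 := by
      intro n
      rw [← ENNReal.toReal_add (measure_ne_top ν _) (measure_ne_top ν _),
        measure_add_measure_compl (hBclosed n).measurableSet, measure_univ,
        ENNReal.toReal_one]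
    have htendCr : Tendsto (fun n => (ν (B n)ᶜ).toReal) atTop (𝓝 0) := by
      have : Tendsto (fun n => 1 - (ν (B n)).toReal) atTop (𝓝 (1 - 1)) :=
        tendsto_const_nhds.sub htendBr
      simp only [sub_self] at this
      refine this.congr fun n => ?_
      have := hsum n; linarith
    -- main estimate
    rw [Metric.tendsto_nhds]
    intro ε' hε'
    set G : ℝ := ‖g‖ with hG
    set I : ℝ := ∫ x, g x ∂μ with hI
    set δ : ℝ := ε' / (4 * (G + 1)) with hδ
    have hG0 : 0 ≤ G := norm_nonneg g
    have hδ0 : 0 < δ := by positivity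
    -- choose n
    have hev1 : ∀ᶠ n : ℕ in atTop, (ν (B n)ᶜ).toReal < δ := htendCr (Iio_mem_nhds hδ0)
    have hev2 : ∀ᶠ n : ℕ in atTop, (1 / 2 : ℝ) < (ν (B n)).toReal :=
      htendBr (Ioi_mem_nhds (by norm_num))
    obtain ⟨n, hnδ, hnhalf⟩ := (hev1.and hev2).exists
    set c : ℝ≥0∞ := ν (B n) with hc
    have hcT : c ≠ ∞ := measure_ne_top ν _
    have hc0 : c ≠ 0 := by
      intro h
      rw [h, ENNReal.toReal_zero] at hnhalf
      linarith
    set ν' : Measure X := c⁻¹ • ν.restrict (B n) with hν'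
    have hν'apply : ν' (B n) = 1 := by
      rw [hν', Measure.smul_apply, Measure.restrict_apply (hBclosed n).measurableSet,
        inter_self, smul_eq_mul, ← hc, ENNReal.inv_mul_cancel hc0 hcT]
    have hν'prob : IsProbabilityMeasure ν' := by
      constructor
      rw [hν', Measure.smul_apply, Measure.restrict_apply_univ, smul_eq_mul, ← hc,
        ENNReal.inv_mul_cancel hc0 hcT]
    have hν'ac : ν' ≪ m := by
      refine Measure.AbsolutelyContinuous.mk fun S hS h0 => ?_
      rw [hν', Measure.smul_apply, Measure.restrict_apply hS, smul_eq_mul]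
      have : ν (S ∩ B n) = 0 :=
        le_antisymm (le_trans (measure_mono inter_subset_left) (hac h0).le) zero_le
      rw [this, mul_zero]
    set μn : Measure X := ν'.map (f n) with hμn
    have hn0 : (0 : ℝ) ≤ (n : ℝ) := Nat.cast_nonneg n
    have hμnprob : IsProbabilityMeasure μn :=
      Measure.isProbabilityMeasure_map (hfc _ hn0).measurable.aemeasurable
    have hμnac : μn ≪ m := hacmap _ hn0 ν' hν'ac
    have hBU : B n ⊆ f (n : ℝ) ⁻¹' U := by
      intro x hx
      exact hCU (mem_iInter₂.mp hx (n : ℝ) self_mem_Ici)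
    have hμnU : μn U = 1 := by
      refine le_antisymm prob_le_one ?_
      rw [hμn, Measure.map_apply (hfc _ hn0).measurable hUopen.measurableSet]
      calc (1 : ℝ≥0∞) = ν' (B n) := hν'apply.symm
        _ ≤ ν' (f (n : ℝ) ⁻¹' U) := measure_mono hBU
    have htend := hU μn hμnprob hμnac hμnU g
    -- shift time
    have h2 : Tendsto (fun t : ℝ => ∫ x, g x ∂(ν'.map (f t))) atTop (𝓝 I) := by
      have hshift : Tendsto (fun t : ℝ => t - (n : ℝ)) atTop atTop :=
        tendsto_atTop_add_const_right atTop (-(n : ℝ)) tendsto_id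
      have h3 := htend.comp hshift
      refine Tendsto.congr' ?_ h3
      filter_upwards [eventually_ge_atTop (n : ℝ)] with t ht
      have ht0 : (0 : ℝ) ≤ t - n := by linarith
      have hmm : μn.map (f (t - n)) = ν'.map (f t) := by
        rw [hμn, Measure.map_map (hfc _ ht0).measurable (hfc _ hn0).measurable,
          ← hfadd _ _ ht0 hn0, sub_add_cancel]
      simp only [Function.comp, hmm]
    have h3 := Metric.tendsto_nhds.mp h2 (ε' / 2) (half_pos hε')
    filter_upwards [h3, eventually_ge_atTop (0 : ℝ)] with t hdist ht0
    -- decompose the integral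
    have hrest : ν.restrict (B n) = c • ν' := by
      rw [hν', smul_smul, ENNReal.mul_inv_cancel hc0 hcT, one_smul]
    have hmapfin : ∀ κ : Measure X, IsFiniteMeasure κ → IsFiniteMeasure (κ.map (f t)) := by
      intro κ hκ
      constructor
      rw [Measure.map_apply (hfc t ht0).measurable MeasurableSet.univ]
      exact measure_lt_top κ _
    have hfin1 : IsFiniteMeasure ((ν.restrict (B n)).map (f t)) :=
      hmapfin _ inferInstance
    have hfin2 : IsFiniteMeasure ((ν.restrict (B n)ᶜ).map (f t)) :=
      hmapfin _ inferInstance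
    have hsplit : ∫ x, g x ∂(ν.map (f t)) =
        c.toReal * (∫ x, g x ∂(ν'.map (f t))) +
          ∫ x, g x ∂((ν.restrict (B n)ᶜ).map (f t)) := by
      conv_lhs => rw [← Measure.restrict_add_restrict_compl (μ := ν) (hBclosed n).measurableSet]
      rw [Measure.map_add _ _ (hfc t ht0).measurable,
        integral_add_measure (g.integrable _) (g.integrable _),
        hrest, Measure.map_smul, integral_smul_measure, smul_eq_mul]
    set Jt : ℝ := ∫ x, g x ∂(ν'.map (f t)) with hJt
    set Et : ℝ := ∫ x, g x ∂((ν.restrict (B n)ᶜ).map (f t)) with hEt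
    have hEtbound : |Et| ≤ G * (ν (B n)ᶜ).toReal := by
      have := norm_integral_le_of_norm_le_const
        (μ := (ν.restrict (B n)ᶜ).map (f t)) (f := fun x => g x) (C := G)
        (Filter.Eventually.of_forall fun x => g.norm_coe_le_norm x)
      rw [measureReal_def, Measure.map_apply (hfc t ht0).measurable MeasurableSet.univ,
        preimage_univ, Measure.restrict_apply_univ] at this
      exact this
    have hIbound : |I| ≤ G := by
      have := norm_integral_le_of_norm_le_const (μ := μ) (f := fun x => g x) (C := G)
        (Filter.Eventually.of_forall fun x => g.norm_coe_le_norm x)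
      rw [probReal_univ, mul_one] at this
      exact this
    have hcle : c.toReal ≤ 1 := by
      rw [hc]
      exact ENNReal.toReal_le_of_le_ofReal one_pos.le (by simpa using prob_le_one)
    have hc0' : 0 ≤ c.toReal := ENNReal.toReal_nonneg
    have hr0 : 0 ≤ (ν (B n)ᶜ).toReal := ENNReal.toReal_nonneg
    have hcr : 1 - c.toReal = (ν (B n)ᶜ).toReal := by
      have := hsum n; rw [hc]; linarith
    rw [Real.dist_eq] at hdist ⊢
    rw [hsplit]
    have htri : ∀ a b : ℝ, |a - b| ≤ |a| + |b| := fun a b => by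
      rw [sub_eq_add_neg]
      exact (abs_add_le a (-b)).trans (by rw [abs_neg])
    have key : |c.toReal * Jt + Et - I| ≤
        c.toReal * |Jt - I| + (1 - c.toReal) * |I| + |Et| := by
      have heq : c.toReal * Jt + Et - I = c.toReal * (Jt - I) - (1 - c.toReal) * I + Et := by
        ring
      rw [heq]
      calc |c.toReal * (Jt - I) - (1 - c.toReal) * I + Et|
          ≤ |c.toReal * (Jt - I) - (1 - c.toReal) * I| + |Et| := abs_add_le _ _
        _ ≤ |c.toReal * (Jt - I)| + |(1 - c.toReal) * I| + |Et| :=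
            add_le_add_left (htri _ _) _
        _ = c.toReal * |Jt - I| + (1 - c.toReal) * |I| + |Et| := by
            rw [abs_mul, abs_mul, abs_of_nonneg hc0', abs_of_nonneg (show (0:ℝ) ≤ 1 - c.toReal by linarith)]
    have s1 : c.toReal * |Jt - I| ≤ |Jt - I| := by
      nlinarith [abs_nonneg (Jt - I)]
    have s2 : (1 - c.toReal) * |I| ≤ (ν (B n)ᶜ).toReal * G := by
      rw [hcr]
      exact mul_le_mul_of_nonneg_left hIbound hr0
    have hδG : (ν (B n)ᶜ).toReal * (G + 1) < ε' / 4 := by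
      have h4 : δ * (G + 1) = ε' / 4 := by
        rw [hδ]
        field_simp
      have h5 : (ν (B n)ᶜ).toReal * (G + 1) < δ * (G + 1) :=
        mul_lt_mul_of_pos_right hnδ (by linarith)
      linarith
    have hG1 : (ν (B n)ᶜ).toReal * G ≤ (ν (B n)ᶜ).toReal * (G + 1) :=
      mul_le_mul_of_nonneg_left (by linarith) hr0
    have hcomm : G * (ν (B n)ᶜ).toReal = (ν (B n)ᶜ).toReal * G := mul_comm _ _
    linarith [key, s1, s2, hEtbound, hdist, hδG, hG1, hcomm]
  · -- easy direction
    intro h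
    refine ⟨inferInstance, hcomp, ?_⟩
    obtain ⟨V, hVopen, hVsub, hVbasin⟩ := hattr
    refine ⟨V, hVopen, hVsub, fun ν hν hac hνV g => ?_⟩
    refine h ν hν hac ?_ g
    refine le_antisymm prob_le_one ?_
    calc (1 : ℝ≥0∞) = ν V := hνV.symm
      _ ≤ ν (basinSet f (msupp μ)) := measure_mono hVbasin
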